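/- Let B₁, B₂ ∈ ℂ^{V×E} be arbitrary matrices, π : E → E a bijection with permutation matrix P ∈ ℂ^{E×E}, h : ℂ^{V×d} → ℂ^{V×k} any function, and X ∈ ℂ^{E×d}. Then (B₁ · Pᵀ)ᴴ · h((B₂ · Pᵀ) · (P · X)) = P · (B₁ᴴ · h(B₂ · X)). In particular, taking B₁ = B₂ to be a boundary operator of a graph shows that the mappings induced by the Magnetic Equivariant, Invariant, and both Fusion Edge Laplacians are permutation equivariant. -/
import Mathlib


open Matrix

/-- The permutation matrix of a bijection `π : E ≃ E`:
`[P]_{e,e'} = 1` if `e = π e'` and `0` otherwise. -/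
noncomputable def permMatrix {E : Type*} [DecidableEq E] (π : Equiv.Perm E) : Matrix E E ℂ :=
  Matrix.of fun e e' => if e = π e' then 1 else 0

lemma permMatrix_transpose_mul_self {E : Type*} [Fintype E] [DecidableEq E]
    (π : Equiv.Perm E) : (permMatrix π)ᵀ * permMatrix π = 1 := by
  ext e e'
  simp only [Matrix.mul_apply, Matrix.transpose_apply, permMatrix, Matrix.of_apply,
    Matrix.one_apply]
  rw [Finset.sum_eq_single (π e)]
  · simp [Equiv.apply_eq_iff_eq, eq_comm]
  · intro b _ hb
    simp only [ite_mul, one_mul, zero_mul]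
    rw [if_neg]
    intro hc
    exact hb (hc ▸ rfl)
  · simp

lemma permMatrix_conjTranspose {E : Type*} [DecidableEq E] (π : Equiv.Perm E) :
    (permMatrix π)ᴴ = (permMatrix π)ᵀ := by
  ext e e'
  simp [permMatrix, Matrix.conjTranspose_apply, Matrix.transpose_apply, apply_ite]

/-- For arbitrary `B₁, B₂ ∈ ℂ^{V×E}`, a permutation matrix `P`, any `h` and any `X`,
`(B₁Pᵀ)ᴴ · h((B₂Pᵀ)·(P·X)) = P · (B₁ᴴ · h(B₂·X))`: the mappings induced by the
Magnetic Equivariant, Invariant and Fusion Edge Laplacians are permutation equivariant. -/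
theorem boundary_mapping_permutation_equivariant
    {V E d k : Type*} [Fintype V] [Fintype E] [DecidableEq E] [Fintype d] [Fintype k]
    (B₁ B₂ : Matrix V E ℂ) (π : Equiv.Perm E)
    (h : Matrix V d ℂ → Matrix V k ℂ) (X : Matrix E d ℂ) :
    (B₁ * (permMatrix π)ᵀ)ᴴ * h ((B₂ * (permMatrix π)ᵀ) * (permMatrix π * X)) =
      permMatrix π * (B₁ᴴ * h (B₂ * X)) := by
  have hP : (permMatrix π)ᵀ * permMatrix π = 1 := permMatrix_transpose_mul_self π
  have h1 : (B₂ * (permMatrix π)ᵀ) * (permMatrix π * X) = B₂ * X := by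
    rw [Matrix.mul_assoc, ← Matrix.mul_assoc (permMatrix π)ᵀ, hP, Matrix.one_mul]
  have h2 : ((permMatrix π)ᵀ)ᴴ = permMatrix π := by
    ext e e'
    simp [permMatrix, Matrix.conjTranspose_apply, apply_ite]
  rw [h1, Matrix.conjTranspose_mul, h2, Matrix.mul_assoc]
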